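/- Let ℙ_{kn} be the exterior algebra on kn anticommuting generators ξ_{ai} (a=1,…,k, i=1,…,n) with left derivations ∂_{ai}. Define actions ρ^{⟨k,n⟩}((e_{ab})_{(i)}) = ξ_{ai}∂_{bi} and ρ^{⟨n,k⟩}((e_{ij})_{(a)}) = ξ_{ai}∂_{aj}. Then for each i = 1,…,n, ρ^{⟨k,n⟩}(H_i^{⟨k,n⟩}(ᾱ, z̄)) = −ρ^{⟨n,k⟩}(G_i^{⟨n,k⟩}(−z̄+1, ᾱ)) as operators on ℙ_{kn}, where H_i is the trigonometric Gaudin Hamiltonian and G_i the trigonometric dynamical Hamiltonian. -/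

import Mathlib

/-- The space `ℙ_{kn}`: the exterior algebra on `kn` anticommuting generators `ξ_{ai}`. -/
abbrev Pkn (k n : ℕ) := ExteriorAlgebra ℂ (Fin k × Fin n → ℂ)

/-- Left multiplication by the generator `ξ_{ai}` of `ℙ_{kn}`. -/
noncomputable def xiOp (k n : ℕ) (p : Fin k × Fin n) : Module.End ℂ (Pkn k n) :=
  LinearMap.mulLeft ℂ (ExteriorAlgebra.ι ℂ (Pi.single p 1))

/-- `ρ^{⟨k,n⟩}((e_{ab})_{(i)}) = ξ_{ai}∂_{bi}`. -/
noncomputable def Ek {k n : ℕ} (D : Fin k × Fin n → Module.End ℂ (Pkn k n))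
    (a b : Fin k) (i : Fin n) : Module.End ℂ (Pkn k n) :=
  xiOp k n (a, i) ∘ₗ D (b, i)

/-- `ρ^{⟨n,k⟩}((e_{ij})_{(a)}) = ξ_{ai}∂_{aj}`. -/
noncomputable def En {k n : ℕ} (D : Fin k × Fin n → Module.End ℂ (Pkn k n))
    (i j : Fin n) (a : Fin k) : Module.End ℂ (Pkn k n) :=
  xiOp k n (a, i) ∘ₗ D (a, j)

/-- `ρ^{⟨k,n⟩}(Ω⁺_{(ij)})`. -/
noncomputable def OmegaP {k n : ℕ} (D : Fin k × Fin n → Module.End ℂ (Pkn k n))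
    (i j : Fin n) : Module.End ℂ (Pkn k n) :=
  (2 : ℂ)⁻¹ • (∑ a : Fin k, Ek D a a i ∘ₗ Ek D a a j) +
    ∑ a : Fin k, ∑ b ∈ Finset.univ.filter (fun b : Fin k => a < b),
      Ek D a b i ∘ₗ Ek D b a j

/-- `ρ^{⟨k,n⟩}(Ω⁻_{(ij)})`. -/
noncomputable def OmegaM {k n : ℕ} (D : Fin k × Fin n → Module.End ℂ (Pkn k n))
    (i j : Fin n) : Module.End ℂ (Pkn k n) :=
  (2 : ℂ)⁻¹ • (∑ a : Fin k, Ek D a a i ∘ₗ Ek D a a j) +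
    ∑ a : Fin k, ∑ b ∈ Finset.univ.filter (fun b : Fin k => a < b),
      Ek D b a i ∘ₗ Ek D a b j

/-- The image `ρ^{⟨k,n⟩}(H_i^{⟨k,n⟩}(ᾱ, z̄))` of the `i`-th trigonometric Gaudin Hamiltonian
`H_i = ∑_a (z_a − e_{aa}/2)(e_{aa})_{(i)} + ∑_{j≠i} (α_i Ω⁺_{(ij)} + α_j Ω⁻_{(ij)})/(α_i − α_j)`. -/
noncomputable def GaudinH {k n : ℕ} (D : Fin k × Fin n → Module.End ℂ (Pkn k n))
    (α : Fin n → ℂ) (z : Fin k → ℂ) (i : Fin n) : Module.End ℂ (Pkn k n) :=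
  (∑ a : Fin k, (z a • Ek D a a i -
      (2 : ℂ)⁻¹ • ((∑ i' : Fin n, Ek D a a i') ∘ₗ Ek D a a i))) +
    ∑ j ∈ Finset.univ.filter (fun j : Fin n => j ≠ i),
      (α i - α j)⁻¹ • (α i • OmegaP D i j + α j • OmegaM D i j)

/-- The image `ρ^{⟨n,k⟩}(G_i^{⟨n,k⟩}(z̄, ᾱ))` of the `i`-th trigonometric dynamical Hamiltonian
`G_i = −e_{ii}²/2 + ∑_a z_a (e_{ii})_{(a)} + ∑_{j≠i} α_j/(α_i−α_j)(e_{ij}e_{ji} − e_{ii})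
 + ∑_j ∑_{a<b} (e_{ij})_{(a)}(e_{ji})_{(b)}`. -/
noncomputable def DynG {k n : ℕ} (D : Fin k × Fin n → Module.End ℂ (Pkn k n))
    (z : Fin k → ℂ) (α : Fin n → ℂ) (i : Fin n) : Module.End ℂ (Pkn k n) :=
  (-(2 : ℂ)⁻¹) • ((∑ a : Fin k, En D i i a) ∘ₗ ∑ a : Fin k, En D i i a) +
    (∑ a : Fin k, z a • En D i i a) +
    (∑ j ∈ Finset.univ.filter (fun j : Fin n => j ≠ i),
      (α j * (α i - α j)⁻¹) •
        (((∑ a : Fin k, En D i j a) ∘ₗ ∑ b : Fin k, En D j i b) -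
          ∑ a : Fin k, En D i i a)) +
    ∑ j : Fin n, ∑ a : Fin k, ∑ b ∈ Finset.univ.filter (fun b : Fin k => a < b),
      En D i j a ∘ₗ En D j i b

/-! ### Auxiliary material for the proof -/

open Finset

section SumSplit

variable {M : Type*} [AddCommMonoid M] {m : ℕ}

/-- Splitting a double sum into the diagonal and the part above the diagonal (using
(anti)symmetry to fold the part below the diagonal). -/
private lemma sum_split (f : Fin m → Fin m → M) :
    (∑ a, ∑ b, f a b) =
      (∑ a, f a a) +
        ∑ a, ∑ b ∈ Finset.univ.filter (fun b => a < b), (f a b + f b a) := by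
  have h1 : ∀ a : Fin m, (∑ b, f a b)
      = f a a + ((∑ b ∈ univ.filter (fun b => a < b), f a b)
        + ∑ b ∈ univ.filter (fun b => b < a), f a b) := by
    intro a
    rw [← Finset.sum_filter_add_sum_filter_not univ (fun b => a < b) (f a)]
    have hins : (Finset.univ.filter (fun b : Fin m => ¬ a < b))
        = insert a (Finset.univ.filter (fun b => b < a)) := by
      ext b
      simp [not_lt, le_iff_lt_or_eq, or_comm]
    rw [hins, Finset.sum_insert (by simp)]
    abel
  have h2 : (∑ a : Fin m, ∑ b ∈ univ.filter (fun b => b < a), f a b)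
      = ∑ a : Fin m, ∑ b ∈ univ.filter (fun b => a < b), f b a := by
    exact Finset.sum_comm' (fun x y => by simp)
  simp only [h1, Finset.sum_add_distrib, h2]

end SumSplit

section KeyAbstract

variable {R : Type*} [Ring R] [Algebra ℂ R] {k n : ℕ}

/-- Abstract mirror of `Ek`. -/
private def ek' (ξ d : Fin k × Fin n → R) (a b : Fin k) (i : Fin n) : R :=
  ξ (a, i) * d (b, i)

/-- Abstract mirror of `En`. -/
private def en' (ξ d : Fin k × Fin n → R) (i j : Fin n) (a : Fin k) : R :=
  ξ (a, i) * d (a, j)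

/-- Abstract mirror of `OmegaP`. -/
private noncomputable def omP (ξ d : Fin k × Fin n → R) (i j : Fin n) : R :=
  (2 : ℂ)⁻¹ • (∑ a : Fin k, ek' ξ d a a i * ek' ξ d a a j) +
    ∑ a : Fin k, ∑ b ∈ Finset.univ.filter (fun b : Fin k => a < b),
      ek' ξ d a b i * ek' ξ d b a j

/-- Abstract mirror of `OmegaM`. -/
private noncomputable def omM (ξ d : Fin k × Fin n → R) (i j : Fin n) : R :=
  (2 : ℂ)⁻¹ • (∑ a : Fin k, ek' ξ d a a i * ek' ξ d a a j) +
    ∑ a : Fin k, ∑ b ∈ Finset.univ.filter (fun b : Fin k => a < b),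
      ek' ξ d b a i * ek' ξ d a b j

/-- Abstract mirror of `GaudinH`. -/
private noncomputable def gd (ξ d : Fin k × Fin n → R) (α : Fin n → ℂ) (z : Fin k → ℂ)
    (i : Fin n) : R :=
  (∑ a : Fin k, (z a • ek' ξ d a a i -
      (2 : ℂ)⁻¹ • ((∑ i' : Fin n, ek' ξ d a a i') * ek' ξ d a a i))) +
    ∑ j ∈ Finset.univ.filter (fun j : Fin n => j ≠ i),
      (α i - α j)⁻¹ • (α i • omP ξ d i j + α j • omM ξ d i j)

/-- Abstract mirror of `DynG`. -/
private noncomputable def dyn (ξ d : Fin k × Fin n → R) (z : Fin k → ℂ) (α : Fin n → ℂ)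
    (i : Fin n) : R :=
  (-(2 : ℂ)⁻¹) • ((∑ a : Fin k, en' ξ d i i a) * ∑ a : Fin k, en' ξ d i i a) +
    (∑ a : Fin k, z a • en' ξ d i i a) +
    (∑ j ∈ Finset.univ.filter (fun j : Fin n => j ≠ i),
      (α j * (α i - α j)⁻¹) •
        (((∑ a : Fin k, en' ξ d i j a) * ∑ b : Fin k, en' ξ d j i b) -
          ∑ a : Fin k, en' ξ d i i a)) +
    ∑ j : Fin n, ∑ a : Fin k, ∑ b ∈ Finset.univ.filter (fun b : Fin k => a < b),
      en' ξ d i j a * en' ξ d j i b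

/-- Normal-ordered quadratic `ξ_p ξ_r ∂_q ∂_s`. -/
private def q4 (ξ d : Fin k × Fin n → R) (p r q s : Fin k × Fin n) : R :=
  ξ p * ξ r * (d q * d s)

private def tT (ξ d : Fin k × Fin n → R) (i j : Fin n) (a : Fin k) : R :=
  q4 ξ d (a, i) (a, j) (a, i) (a, j)

private def pP (ξ d : Fin k × Fin n → R) (i j : Fin n) (a b : Fin k) : R :=
  q4 ξ d (a, i) (b, j) (a, j) (b, i)

private def qQ (ξ d : Fin k × Fin n → R) (i j : Fin n) (a b : Fin k) : R :=
  q4 ξ d (b, i) (a, j) (b, j) (a, i)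

private noncomputable def tSum (ξ d : Fin k × Fin n → R) (i j : Fin n) : R :=
  ∑ a : Fin k, tT ξ d i j a

private noncomputable def pSum (ξ d : Fin k × Fin n → R) (i j : Fin n) : R :=
  ∑ a : Fin k, ∑ b ∈ Finset.univ.filter (fun b : Fin k => a < b), pP ξ d i j a b

private noncomputable def qSum (ξ d : Fin k × Fin n → R) (i j : Fin n) : R :=
  ∑ a : Fin k, ∑ b ∈ Finset.univ.filter (fun b : Fin k => a < b), qQ ξ d i j a b

private noncomputable def lL (ξ d : Fin k × Fin n → R) (i : Fin n) (a : Fin k) : R :=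
  ξ (a, i) * d (a, i)

private noncomputable def sS (ξ d : Fin k × Fin n → R) (i : Fin n) : R :=
  ∑ a : Fin k, lL ξ d i a

variable {ξ d : Fin k × Fin n → R}

private lemma prodN (hDX : ∀ p q, d p * ξ q = (if p = q then 1 else 0) - ξ q * d p)
    (p q r s : Fin k × Fin n) :
    (ξ p * d q) * (ξ r * d s) = (if q = r then ξ p * d s else 0) - q4 ξ d p r q s := by
  have h : (ξ p * d q) * (ξ r * d s) = ξ p * ((d q * ξ r) * d s) := by noncomm_ring
  rw [h, hDX]
  unfold q4
  split_ifs <;> noncomm_ring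

private lemma q4_swapX (hXsw : ∀ p q, ξ p * ξ q = -(ξ q * ξ p)) (p r q s : Fin k × Fin n) :
    q4 ξ d p r q s = -q4 ξ d r p q s := by
  unfold q4; rw [hXsw p r]; noncomm_ring

private lemma q4_swapD (hDsw : ∀ p q, d p * d q = -(d q * d p)) (p r q s : Fin k × Fin n) :
    q4 ξ d p r q s = -q4 ξ d p r s q := by
  unfold q4; rw [hDsw q s]; noncomm_ring

private lemma q4_swap2 (hXsw : ∀ p q, ξ p * ξ q = -(ξ q * ξ p))
    (hDsw : ∀ p q, d p * d q = -(d q * d p)) (p r q s : Fin k × Fin n) :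
    q4 ξ d p r q s = q4 ξ d r p s q := by
  rw [q4_swapX hXsw, q4_swapD hDsw, neg_neg]

private lemma q4_fst_eq (hX0 : ∀ p, ξ p * ξ p = 0) (p q s : Fin k × Fin n) :
    q4 ξ d p p q s = 0 := by
  unfold q4; rw [hX0, zero_mul]

section WithRel

variable (hXsw : ∀ p q, ξ p * ξ q = -(ξ q * ξ p))
variable (hX0 : ∀ p, ξ p * ξ p = 0)
variable (hDsw : ∀ p q, d p * d q = -(d q * d p))
variable (hDX : ∀ p q, d p * ξ q = (if p = q then 1 else 0) - ξ q * d p)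

include hDsw hDX in
private lemma omP_eq (i j : Fin n) (hij : i ≠ j) :
    omP ξ d i j = (-(2 : ℂ)⁻¹) • tSum ξ d i j + pSum ξ d i j := by
  unfold omP tSum pSum
  congr 1
  · have h : ∀ a : Fin k, ek' ξ d a a i * ek' ξ d a a j = -tT ξ d i j a := by
      intro a
      unfold ek' tT
      rw [prodN hDX, if_neg (fun h => hij (congrArg Prod.snd h)), zero_sub]
    simp only [h, Finset.sum_neg_distrib, smul_neg, neg_smul]
  · refine Finset.sum_congr rfl fun a _ => Finset.sum_congr rfl fun b hb => ?_
    unfold ek' pP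
    rw [prodN hDX, if_neg (fun h => hij (congrArg Prod.snd h)), zero_sub,
      q4_swapD hDsw, neg_neg]

include hDX hDsw in
private lemma omM_eq (i j : Fin n) (hij : i ≠ j) :
    omM ξ d i j = (-(2 : ℂ)⁻¹) • tSum ξ d i j + qSum ξ d i j := by
  unfold omM tSum qSum
  congr 1
  · have h : ∀ a : Fin k, ek' ξ d a a i * ek' ξ d a a j = -tT ξ d i j a := by
      intro a
      unfold ek' tT
      rw [prodN hDX, if_neg (fun h => hij (congrArg Prod.snd h)), zero_sub]
    simp only [h, Finset.sum_neg_distrib, smul_neg, neg_smul]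
  · refine Finset.sum_congr rfl fun a _ => Finset.sum_congr rfl fun b hb => ?_
    unfold ek' qQ
    rw [prodN hDX, if_neg (fun h => hij (congrArg Prod.snd h)), zero_sub,
      q4_swapD hDsw, neg_neg]

include hXsw hDsw hDX in
private lemma gd_first (z : Fin k → ℂ) (i : Fin n) :
    (∑ a : Fin k, (z a • ek' ξ d a a i -
        (2 : ℂ)⁻¹ • ((∑ i' : Fin n, ek' ξ d a a i') * ek' ξ d a a i)))
      = (∑ a : Fin k, z a • lL ξ d i a) - (2 : ℂ)⁻¹ • sS ξ d i
        + (2 : ℂ)⁻¹ • ∑ j : Fin n, tSum ξ d i j := by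
  have hinner : ∀ a : Fin k,
      (∑ i' : Fin n, ek' ξ d a a i') * ek' ξ d a a i
        = lL ξ d i a - ∑ i' : Fin n, tT ξ d i i' a := by
    intro a
    rw [Finset.sum_mul]
    have hpt : ∀ i' : Fin n, ek' ξ d a a i' * ek' ξ d a a i
        = (if i' = i then lL ξ d i a else 0) - tT ξ d i i' a := by
      intro i'
      unfold ek' tT lL
      rw [prodN hDX]
      congr 1
      · by_cases h : i' = i
        · subst h; simp
        · rw [if_neg (fun hh => h (congrArg Prod.snd hh)), if_neg h]
      · exact (q4_swap2 hXsw hDsw _ _ _ _).symm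
    simp only [hpt, Finset.sum_sub_distrib, Finset.sum_ite_eq', Finset.mem_univ, if_true]
  simp only [hinner, smul_sub, Finset.sum_sub_distrib]
  unfold sS tSum
  simp only [Finset.smul_sum]
  rw [Finset.sum_comm (f := fun a i' => (2:ℂ)⁻¹ • tT ξ d i i' a)]
  unfold lL ek'
  abel

include hXsw hX0 hDsw hDX in
private lemma dyn_sq (i : Fin n) :
    (∑ a : Fin k, en' ξ d i i a) * (∑ a : Fin k, en' ξ d i i a)
      = sS ξ d i - (pSum ξ d i i + pSum ξ d i i) := by
  rw [Finset.sum_mul]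
  simp only [Finset.mul_sum]
  have hpt : ∀ a b : Fin k, en' ξ d i i a * en' ξ d i i b
      = (if a = b then lL ξ d i a else 0) - q4 ξ d (a, i) (b, i) (a, i) (b, i) := by
    intro a b
    unfold en' lL
    rw [prodN hDX]
    congr 1
    by_cases h : a = b
    · subst h; simp
    · rw [if_neg (fun hh => h (congrArg Prod.fst hh)), if_neg h]
  simp only [hpt, Finset.sum_sub_distrib]
  congr 1
  · unfold sS
    simp [Finset.sum_ite_eq]
  · rw [sum_split (f := fun a b => q4 ξ d (a, i) (b, i) (a, i) (b, i))]
    have hdiag : ∀ a : Fin k, q4 ξ d (a, i) (a, i) (a, i) (a, i) = 0 :=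
      fun a => q4_fst_eq hX0 _ _ _
    have hsym : ∀ a b : Fin k, q4 ξ d (b, i) (a, i) (b, i) (a, i)
        = q4 ξ d (a, i) (b, i) (a, i) (b, i) := fun a b => q4_swap2 hXsw hDsw _ _ _ _
    simp only [hdiag, Finset.sum_const_zero, zero_add, hsym]
    unfold pSum pP
    rw [← Finset.sum_add_distrib]
    refine Finset.sum_congr rfl fun a _ => ?_
    rw [← Finset.sum_add_distrib]

include hXsw hX0 hDsw hDX in
private lemma dyn_cross (i j : Fin n) (hij : i ≠ j) :
    (∑ a : Fin k, en' ξ d i j a) * (∑ b : Fin k, en' ξ d j i b)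
      = sS ξ d i + tSum ξ d i j - (pSum ξ d i j + qSum ξ d i j) := by
  rw [Finset.sum_mul]
  simp only [Finset.mul_sum]
  have hpt : ∀ a b : Fin k, en' ξ d i j a * en' ξ d j i b
      = (if a = b then lL ξ d i a else 0) - q4 ξ d (a, i) (b, j) (a, j) (b, i) := by
    intro a b
    unfold en' lL
    rw [prodN hDX]
    congr 1
    by_cases h : a = b
    · subst h; simp
    · rw [if_neg (fun hh => h (congrArg Prod.fst hh)), if_neg h]
  simp only [hpt, Finset.sum_sub_distrib]
  have h1 : (∑ a : Fin k, ∑ b : Fin k, if a = b then lL ξ d i a else 0) = sS ξ d i := by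
    unfold sS
    simp [Finset.sum_ite_eq]
  rw [h1, sum_split (f := fun a b => q4 ξ d (a, i) (b, j) (a, j) (b, i))]
  have hdiag : ∀ a : Fin k, q4 ξ d (a, i) (a, j) (a, j) (a, i) = -tT ξ d i j a := by
    intro a
    rw [q4_swapD hDsw]
    rfl
  simp only [hdiag, Finset.sum_neg_distrib]
  have hoff : (∑ a : Fin k, ∑ b ∈ Finset.univ.filter (fun b : Fin k => a < b),
      (q4 ξ d (a, i) (b, j) (a, j) (b, i) + q4 ξ d (b, i) (a, j) (b, j) (a, i)))
      = pSum ξ d i j + qSum ξ d i j := by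
    unfold pSum qSum pP qQ
    rw [← Finset.sum_add_distrib]
    exact Finset.sum_congr rfl fun a _ => (Finset.sum_add_distrib)
  rw [hoff]
  unfold tSum
  abel

include hDX in
private lemma dyn_last (i : Fin n) :
    (∑ j : Fin n, ∑ a : Fin k, ∑ b ∈ Finset.univ.filter (fun b : Fin k => a < b),
        en' ξ d i j a * en' ξ d j i b)
      = -(pSum ξ d i i + ∑ j ∈ Finset.univ.erase i, pSum ξ d i j) := by
  have hpt : ∀ (j : Fin n) (a b : Fin k), a ≠ b →
      en' ξ d i j a * en' ξ d j i b = -pP ξ d i j a b := by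
    intro j a b hab
    unfold en' pP
    rw [prodN hDX, if_neg (fun h => hab (congrArg Prod.fst h)), zero_sub]
  have h1 : (∑ j : Fin n, ∑ a : Fin k, ∑ b ∈ Finset.univ.filter (fun b : Fin k => a < b),
      en' ξ d i j a * en' ξ d j i b) = -∑ j : Fin n, pSum ξ d i j := by
    rw [← Finset.sum_neg_distrib]
    refine Finset.sum_congr rfl fun j _ => ?_
    unfold pSum
    rw [← Finset.sum_neg_distrib]
    refine Finset.sum_congr rfl fun a _ => ?_
    rw [← Finset.sum_neg_distrib]
    refine Finset.sum_congr rfl fun b hb => ?_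
    exact hpt j a b (Finset.mem_filter.mp hb).2.ne
  rw [h1, ← Finset.add_sum_erase _ _ (Finset.mem_univ i)]

include hXsw hX0 hDsw hDX in
private theorem key (z : Fin k → ℂ) (α : Fin n → ℂ) (hα : Function.Injective α) (i : Fin n) :
    gd ξ d α z i = - dyn ξ d (fun a => -z a + 1) α i := by
  have hfilter : (Finset.univ.filter (fun j : Fin n => j ≠ i)) = Finset.univ.erase i :=
    Finset.filter_ne' _ _
  have htself : tSum ξ d i i = 0 := by
    unfold tSum tT
    exact Finset.sum_eq_zero fun a _ => q4_fst_eq hX0 _ _ _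
  have hTfold : (∑ j : Fin n, tSum ξ d i j) = ∑ j ∈ Finset.univ.erase i, tSum ξ d i j := by
    rw [← Finset.add_sum_erase _ _ (Finset.mem_univ i), htself, zero_add]
  have hS : (∑ a : Fin k, en' ξ d i i a) = sS ξ d i := rfl
  have hzL : (∑ a : Fin k, (-z a + 1) • en' ξ d i i a)
      = sS ξ d i - ∑ a : Fin k, z a • lL ξ d i a := by
    have : ∀ a : Fin k, (-z a + 1) • en' ξ d i i a = lL ξ d i a - z a • lL ξ d i a := by
      intro a
      have h : en' ξ d i i a = lL ξ d i a := rfl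
      rw [h, add_smul, neg_smul, one_smul]
      abel
    simp only [this, Finset.sum_sub_distrib]
    rfl
  -- Left-hand side in canonical form
  have hL : gd ξ d α z i
      = ((∑ a : Fin k, z a • lL ξ d i a) - (2 : ℂ)⁻¹ • sS ξ d i)
        + ∑ j ∈ Finset.univ.erase i,
            ((2 : ℂ)⁻¹ • tSum ξ d i j +
              (α i - α j)⁻¹ •
                (α i • ((-(2 : ℂ)⁻¹) • tSum ξ d i j + pSum ξ d i j) +
                 α j • ((-(2 : ℂ)⁻¹) • tSum ξ d i j + qSum ξ d i j))) := by
    unfold gd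
    rw [gd_first hXsw hDsw hDX, hfilter, hTfold]
    rw [Finset.sum_add_distrib, ← Finset.smul_sum]
    have hsum : (∑ j ∈ Finset.univ.erase i,
        (α i - α j)⁻¹ • (α i • omP ξ d i j + α j • omM ξ d i j))
        = ∑ j ∈ Finset.univ.erase i,
            (α i - α j)⁻¹ •
              (α i • ((-(2 : ℂ)⁻¹) • tSum ξ d i j + pSum ξ d i j) +
               α j • ((-(2 : ℂ)⁻¹) • tSum ξ d i j + qSum ξ d i j)) := by
      refine Finset.sum_congr rfl fun j hj => ?_
      have hij : i ≠ j := (Finset.ne_of_mem_erase hj).symm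
      rw [omP_eq hDsw hDX i j hij, omM_eq hDsw hDX i j hij]
    rw [hsum]
    abel
  -- Right-hand side in canonical form
  have hR : - dyn ξ d (fun a => -z a + 1) α i
      = ((∑ a : Fin k, z a • lL ξ d i a) - (2 : ℂ)⁻¹ • sS ξ d i)
        + ∑ j ∈ Finset.univ.erase i,
            ((-(α j * (α i - α j)⁻¹)) • (tSum ξ d i j - (pSum ξ d i j + qSum ξ d i j))
              + pSum ξ d i j) := by
    unfold dyn
    rw [hfilter]
    beta_reduce
    rw [dyn_sq hXsw hX0 hDsw hDX, dyn_last hDX (ξ := ξ) (d := d) i, hzL, hS]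
    have hsum : (∑ j ∈ Finset.univ.erase i,
        (α j * (α i - α j)⁻¹) •
          (((∑ a : Fin k, en' ξ d i j a) * ∑ b : Fin k, en' ξ d j i b) -
            sS ξ d i))
        = ∑ j ∈ Finset.univ.erase i,
            (α j * (α i - α j)⁻¹) • (tSum ξ d i j - (pSum ξ d i j + qSum ξ d i j)) := by
      refine Finset.sum_congr rfl fun j hj => ?_
      have hij : i ≠ j := (Finset.ne_of_mem_erase hj).symm
      rw [dyn_cross hXsw hX0 hDsw hDX i j hij]
      congr 1
      abel
    rw [hsum]
    rw [Finset.sum_add_distrib]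
    simp only [neg_smul, Finset.sum_neg_distrib]
    match_scalars <;> ring
  rw [hL, hR]
  congr 1
  refine Finset.sum_congr rfl fun j hj => ?_
  have hij : α i - α j ≠ 0 := by
    have : i ≠ j := (Finset.ne_of_mem_erase hj).symm
    exact sub_ne_zero_of_ne (fun h => this (hα h))
  match_scalars
  · field_simp
    ring
  · field_simp
    ring
  · field_simp

end WithRel

end KeyAbstract

section Relations

variable {k n : ℕ}

private lemma xi_sq (p : Fin k × Fin n) : xiOp k n p * xiOp k n p = 0 := by
  refine LinearMap.ext fun w => ?_
  show ExteriorAlgebra.ι ℂ (Pi.single p 1) * (ExteriorAlgebra.ι ℂ (Pi.single p 1) * w) = 0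
  rw [← mul_assoc, ExteriorAlgebra.ι_sq_zero, zero_mul]

private lemma xi_swap (p q : Fin k × Fin n) :
    xiOp k n p * xiOp k n q = -(xiOp k n q * xiOp k n p) := by
  refine LinearMap.ext fun w => ?_
  show ExteriorAlgebra.ι ℂ (Pi.single p 1) * (ExteriorAlgebra.ι ℂ (Pi.single q 1) * w)
    = -(ExteriorAlgebra.ι ℂ (Pi.single q 1) * (ExteriorAlgebra.ι ℂ (Pi.single p 1) * w))
  rw [eq_neg_iff_add_eq_zero, ← mul_assoc, ← mul_assoc, ← add_mul,
    ExteriorAlgebra.ι_add_mul_swap, zero_mul]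

variable {D : Fin k × Fin n → Module.End ℂ (Pkn k n)}

private lemma d_mul_xi
    (hDer : ∀ (p : Fin k × Fin n) (v : Fin k × Fin n → ℂ) (w : Pkn k n),
      D p (ExteriorAlgebra.ι ℂ v * w) = v p • w - ExteriorAlgebra.ι ℂ v * D p w)
    (p q : Fin k × Fin n) :
    D p * xiOp k n q = (if p = q then 1 else 0) - xiOp k n q * D p := by
  refine LinearMap.ext fun w => ?_
  simp only [Module.End.mul_apply, LinearMap.sub_apply, xiOp, LinearMap.mulLeft_apply]
  rw [hDer, Pi.single_apply]
  split_ifs with h <;> simp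

private lemma d_swap
    (hD1 : ∀ p, D p 1 = 0)
    (hDer : ∀ (p : Fin k × Fin n) (v : Fin k × Fin n → ℂ) (w : Pkn k n),
      D p (ExteriorAlgebra.ι ℂ v * w) = v p • w - ExteriorAlgebra.ι ℂ v * D p w)
    (p q : Fin k × Fin n) :
    D p * D q = -(D q * D p) := by
  have main : ∀ x : Pkn k n, ∀ w : Pkn k n,
      D p (D q (x * w)) + D q (D p (x * w))
        = x * (D p (D q w) + D q (D p w)) := by
    intro x
    induction x using ExteriorAlgebra.induction with
    | algebraMap r =>
        intro w
        simp only [← Algebra.smul_def, map_smul, smul_add]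
    | ι v =>
        intro w
        rw [hDer q v w, hDer p v w, map_sub, map_smul, hDer p v (D q w),
          map_sub, map_smul, hDer q v (D p w), mul_add]
        module
    | mul x y hx hy =>
        intro w
        rw [mul_assoc, hx, hy, mul_assoc]
    | add x y hx hy =>
        intro w
        rw [add_mul, map_add, map_add, map_add, map_add, add_mul, ← hx w, ← hy w]
        abel
  refine LinearMap.ext fun w => ?_
  show D p (D q w) = -(D q (D p w))
  have h := main w 1
  rw [mul_one, hD1, hD1, map_zero, map_zero, add_zero, mul_zero] at h
  exact eq_neg_of_add_eq_zero_left h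

end Relations

/-- On `ℙ_{kn}`, with `ξ_{ai}` the multiplication operators and `∂_{ai}`
the left derivations, and with `z₁,…,z_k`, `α₁,…,αₙ` pairwise distinct (`αᵢ ≠ 0`), for each
`i = 1,…,n`:
`ρ^{⟨k,n⟩}(H_i^{⟨k,n⟩}(ᾱ, z̄)) = −ρ^{⟨n,k⟩}(G_i^{⟨n,k⟩}(−z̄+1, ᾱ))` as operators on `ℙ_{kn}`. -/
theorem stmt18 (k n : ℕ) (z : Fin k → ℂ) (α : Fin n → ℂ)
    (hz : Function.Injective z) (hα : Function.Injective α) (hα0 : ∀ i, α i ≠ 0)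
    (D : Fin k × Fin n → Module.End ℂ (Pkn k n))
    (hD1 : ∀ p, D p 1 = 0)
    (hDer : ∀ (p : Fin k × Fin n) (v : Fin k × Fin n → ℂ) (w : Pkn k n),
      D p (ExteriorAlgebra.ι ℂ v * w) = v p • w - ExteriorAlgebra.ι ℂ v * D p w) :
    ∀ i : Fin n,
      GaudinH D α z i = - DynG D (fun a => -z a + 1) α i := by
  intro i
  have hGd : GaudinH D α z i = gd (xiOp k n) D α z i := rfl
  have hDyn : DynG D (fun a => -z a + 1) α i = dyn (xiOp k n) D (fun a => -z a + 1) α i := rfl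
  rw [hGd, hDyn]
  exact key (xi_swap) (xi_sq) (d_swap hD1 hDer) (d_mul_xi hDer) z α hα i
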